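/- arXiv:2203.02425 — 2 statements merged into one kernel-verified Lean document; each statement's English description precedes it below -/
import Mathlib

section
/- Abstract Alessandrini identity: Let H be a real Hilbert space, V ⊂ H closed, and B₁, B₂ : H × H → R bounded bilinear forms coercive on V. Let f, g ∈ H, let u_f solve B₁(u_f, ·) = 0 on V with u_f − f ∈ V, and let u_g^* solve B₂^*(u_g^*, ·) = 0 on V with u_g^* − g ∈ V, where B₂^*(u,v) = B₂(v,u). Then (Λ_{B₁} − Λ_{B₂})[f][g] = (B₁ − B₂)(u_f, u_g^*). -/
/-- Abstract Alessandrini identity. With `Λ_{B₁}[f][g] = B₁(u_f, g)`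
and `Λ_{B₂}[f][g] = B₂^*(u_g^*, f) = B₂(f, u_g^*)`, where `u_f` solves `B₁(u_f, ·) = 0`
on `V` with `u_f - f ∈ V` and `u_g^*` solves `B₂^*(u_g^*, ·) = 0` on `V` with
`u_g^* - g ∈ V`, one has `(Λ_{B₁} - Λ_{B₂})[f][g] = (B₁ - B₂)(u_f, u_g^*)`. -/
theorem abstract_alessandrini {H : Type*} [NormedAddCommGroup H]
    [InnerProductSpace ℝ H] [CompleteSpace H]
    (V : Submodule ℝ H) (hV : IsClosed (V : Set H))
    (B₁ B₂ : H →L[ℝ] H →L[ℝ] ℝ)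
    (c₁ : ℝ) (hc₁ : 0 < c₁) (hcoer₁ : ∀ v ∈ V, c₁ * ‖v‖ ^ 2 ≤ B₁ v v)
    (c₂ : ℝ) (hc₂ : 0 < c₂) (hcoer₂ : ∀ v ∈ V, c₂ * ‖v‖ ^ 2 ≤ B₂ v v)
    (f g uf ug : H)
    (huf : uf - f ∈ V) (huf0 : ∀ φ ∈ V, B₁ uf φ = 0)
    (hug : ug - g ∈ V) (hug0 : ∀ φ ∈ V, B₂ φ ug = 0) :
    B₁ uf g - B₂ f ug = B₁ uf ug - B₂ uf ug := by
  have h1 : B₁ uf (ug - g) = 0 := huf0 _ hug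
  have h2 : B₂ (uf - f) ug = 0 := hug0 _ huf
  simp only [map_sub, ContinuousLinearMap.sub_apply, sub_eq_zero] at h1 h2
  rw [h1, h2]
end

section
/- Abstract Runge approximation: Let H be a real Hilbert space, V ⊂ H a closed subspace, W ⊂ H a subspace, and B = L + q with L, q : H × H → R bounded bilinear forms, B coercive on V. Assume: (a) q(w, φ) = 0 for all w ∈ W, φ ∈ V (locality/disjoint support hypothesis); (b) for every φ ∈ V, if L(w, φ) = 0 for all w ∈ W then φ = 0 (right UCP hypothesis). For f ∈ W let u_f be the unique solution with u_f − f ∈ V and B(u_f, ·) = 0 on V. Then the set R = { u_f − f : f ∈ W } is dense in V. -/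
open RealInnerProductSpace

set_option maxHeartbeats 1000000

/-- Abstract Runge approximation. Let `H` be a real Hilbert space,
`V` a closed subspace, `W` a subspace, and `B = L + q` with `L, q` bounded bilinear forms,
`B` coercive on `V`. Assume (a) locality: `q(w, φ) = 0` for `w ∈ W`, `φ ∈ V`, and
(b) right UCP: if `φ ∈ V` and `L(w, φ) = 0` for all `w ∈ W` then `φ = 0`. If `sol f`
denotes the solution with `sol f - f ∈ V` and `B(sol f, ·) = 0` on `V` for `f ∈ W`,
then `{ sol f - f : f ∈ W }` is dense in `V`. -/
theorem abstract_runge_approximation {H : Type*} [NormedAddCommGroup H]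
    [InnerProductSpace ℝ H] [CompleteSpace H]
    (V : Submodule ℝ H) (hV : IsClosed (V : Set H))
    (W : Submodule ℝ H)
    (L q : H →L[ℝ] H →L[ℝ] ℝ)
    (c : ℝ) (hc : 0 < c) (hcoer : ∀ v ∈ V, c * ‖v‖ ^ 2 ≤ L v v + q v v)
    (hlocal : ∀ w ∈ W, ∀ φ ∈ V, q w φ = 0)
    (hUCP : ∀ φ ∈ V, (∀ w ∈ W, L w φ = 0) → φ = 0)
    (sol : H → H)
    (hsol : ∀ f ∈ W, sol f - f ∈ V ∧ ∀ φ ∈ V, L (sol f) φ + q (sol f) φ = 0) :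
    ∀ v ∈ V, v ∈ closure {x : H | ∃ f ∈ W, x = sol f - f} := by
  intro v hv
  haveI : CompleteSpace V := hV.completeSpace_coe
  set A : H →L[ℝ] H →L[ℝ] ℝ := L + q with hA
  have hAapp : ∀ x y : H, A x y = L x y + q x y := by intro x y; simp [hA]
  -- uniqueness of solutions
  have huniq : ∀ f ∈ W, ∀ x : H, x - f ∈ V → (∀ φ ∈ V, A x φ = 0) → x = sol f := by
    intro f hf x hx hBx
    obtain ⟨h1, h2⟩ := hsol f hf
    have hd : x - sol f ∈ V := by
      have := V.sub_mem hx h1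
      simpa using this
    have e1 : A x (x - sol f) = 0 := hBx _ hd
    have e2 : A (sol f) (x - sol f) = 0 := by rw [hAapp]; exact h2 _ hd
    have hzero : A (x - sol f) (x - sol f) = 0 := by
      have heq : A (x - sol f) (x - sol f) = A x (x - sol f) - A (sol f) (x - sol f) := by
        simp only [map_sub, ContinuousLinearMap.sub_apply]
        ring
      rw [heq, e1, e2, sub_zero]
    rw [hAapp] at hzero
    have hle := hcoer (x - sol f) hd
    rw [hzero] at hle
    have ht : ‖x - sol f‖ ^ 2 ≤ 0 := by
      rw [show (0:ℝ) = c * 0 by ring] at hle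
      exact le_of_mul_le_mul_left hle hc
    have h0 : ‖x - sol f‖ = 0 :=
      pow_eq_zero_iff two_ne_zero |>.mp (le_antisymm ht (sq_nonneg _))
    exact sub_eq_zero.mp (norm_eq_zero.mp h0)
  -- the set R is a submodule
  set R : Set H := {x : H | ∃ f ∈ W, x = sol f - f} with hR
  have hsol0 : (0 : H) ∈ R := by
    refine ⟨0, W.zero_mem, ?_⟩
    have : (0 : H) = sol 0 := by
      refine huniq 0 W.zero_mem 0 (by simp) ?_
      intro φ hφ; simp
    simp [← this]
  have hadd : ∀ x ∈ R, ∀ y ∈ R, x + y ∈ R := by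
    rintro _ ⟨f, hf, rfl⟩ _ ⟨g, hg, rfl⟩
    refine ⟨f + g, W.add_mem hf hg, ?_⟩
    have hs : sol f + sol g = sol (f + g) := by
      refine huniq (f + g) (W.add_mem hf hg) _ ?_ ?_
      · have := V.add_mem (hsol f hf).1 (hsol g hg).1
        convert this using 1; abel
      · intro φ hφ
        have h1 := (hsol f hf).2 φ hφ
        have h2 := (hsol g hg).2 φ hφ
        simp only [hAapp, map_add, ContinuousLinearMap.add_apply]
        linarith
    rw [← hs]; abel
  have hsmul : ∀ (a : ℝ), ∀ x ∈ R, a • x ∈ R := by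
    rintro a _ ⟨f, hf, rfl⟩
    refine ⟨a • f, W.smul_mem a hf, ?_⟩
    have hs : a • sol f = sol (a • f) := by
      refine huniq (a • f) (W.smul_mem a hf) _ ?_ ?_
      · have := V.smul_mem a (hsol f hf).1
        convert this using 1; rw [smul_sub]
      · intro φ hφ
        have h1 := (hsol f hf).2 φ hφ
        simp only [hAapp, map_smul, ContinuousLinearMap.smul_apply, smul_eq_mul]
        rw [h1, mul_zero]
    rw [← hs, smul_sub]
  set M : Submodule ℝ H :=
    { carrier := R
      add_mem' := fun ha hb => hadd _ ha _ hb
      zero_mem' := hsol0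
      smul_mem' := fun a x hx => hsmul a x hx } with hM
  set M' : Submodule ℝ H := M.topologicalClosure with hM'
  have hgoal : v ∈ M' → v ∈ closure R := by
    intro h
    have : (M' : Set H) = closure R := by
      simp [hM', Submodule.topologicalClosure_coe]; rfl
    rw [← this]; exact h
  apply hgoal
  by_contra hvM
  haveI : CompleteSpace M' := M.isClosed_topologicalClosure.completeSpace_coe
  -- φ = v - proj v
  set p : H := (Submodule.orthogonalProjectionOnto M' v : H) with hp
  set φ : H := v - p with hφdef
  have hMV : (M' : Set H) ⊆ (V : Set H) := by
    have hMsubV : (M : Set H) ⊆ (V : Set H) := by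
      rintro _ ⟨f, hf, rfl⟩; exact (hsol f hf).1
    have := closure_mono hMsubV
    rw [hV.closure_eq] at this
    simpa [hM', Submodule.topologicalClosure_coe] using this
  have hpV : p ∈ V := hMV (Submodule.orthogonalProjectionOnto M' v).2
  have hφV : φ ∈ V := V.sub_mem hv hpV
  have hφortho : ∀ m ∈ M', ⟪φ, m⟫ = 0 := by
    intro m hm
    have h := Submodule.sub_starProjection_mem_orthogonal (K := M') v
    have h2 := (Submodule.mem_orthogonal _ _).1 h m hm
    rw [real_inner_comm] at h2
    exact h2
  have hφne : φ ≠ 0 := by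
    intro h
    apply hvM
    have : v = p := by rwa [hφdef, sub_eq_zero] at h
    rw [this]; exact (Submodule.orthogonalProjectionOnto M' v).2
  -- Lax-Milgram on V with the transpose form
  set B' : V →L[ℝ] V →L[ℝ] ℝ :=
    ((A.comp V.subtypeL).flip.comp V.subtypeL) with hB'
  have hB'app : ∀ x y : V, B' x y = A (y : H) (x : H) := by
    intro x y; simp [hB']
  have hcoerB' : IsCoercive B' := by
    refine ⟨c, hc, ?_⟩
    intro u
    have := hcoer (u : H) u.2
    rw [hB'app, ← hAapp] at *
    calc c * ‖u‖ * ‖u‖ = c * ‖(u : H)‖ ^ 2 := by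
            rw [Submodule.norm_coe]; ring
      _ ≤ A (u : H) (u : H) := this
  set e := hcoerB'.continuousLinearEquivOfBilin with he
  set ψ : V := e.symm ⟨φ, hφV⟩ with hψ
  have hψprop : ∀ u : V, ⟪(⟨φ, hφV⟩ : V), u⟫ = B' ψ u := by
    intro u
    have := hcoerB'.continuousLinearEquivOfBilin_apply ψ u
    rw [hψ] at this ⊢
    rw [← this, ContinuousLinearEquiv.apply_symm_apply]
  -- test against elements of R
  have hLψ : ∀ f ∈ W, L f (ψ : H) = 0 := by
    intro f hf
    have hrV : sol f - f ∈ V := (hsol f hf).1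
    have hrR : sol f - f ∈ M' := Submodule.le_topologicalClosure M ⟨f, hf, rfl⟩
    have h1 : ⟪φ, sol f - f⟫ = 0 := hφortho _ hrR
    have h2 : ⟪(⟨φ, hφV⟩ : V), (⟨sol f - f, hrV⟩ : V)⟫ = (0 : ℝ) := by
      rw [Submodule.coe_inner]; exact h1
    have h3 : B' ψ ⟨sol f - f, hrV⟩ = 0 := by rw [← hψprop]; exact h2
    rw [hB'app] at h3
    have h4 : A (sol f - f) (ψ : H) = 0 := h3
    have h5 : A (sol f) (ψ : H) = 0 := by
      have := (hsol f hf).2 (ψ : H) ψ.2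
      rw [hAapp]; linarith
    have h6 : q f (ψ : H) = 0 := hlocal f hf (ψ : H) ψ.2
    have : A f (ψ : H) = 0 := by
      have := h4
      simp only [map_sub, ContinuousLinearMap.sub_apply] at this
      linarith [h5]
    rw [hAapp] at this
    linarith [h6]
  have hψ0 : (ψ : H) = 0 := hUCP (ψ : H) ψ.2 hLψ
  have hψ0' : ψ = 0 := Submodule.coe_eq_zero.mp hψ0
  have : ⟪(⟨φ, hφV⟩ : V), (⟨φ, hφV⟩ : V)⟫ = (0 : ℝ) := by
    rw [hψprop ⟨φ, hφV⟩, hψ0']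
    simp
  have : φ = 0 := by
    have h := inner_self_eq_zero.mp this
    exact congrArg Subtype.val h
  exact hφne this
end
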